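/- Let R be an N×N Hermitian matrix and Q an N×N Hermitian positive definite matrix over ℂ. Define f(A) = tr(R) − tr(A R) − tr(R A^H) + tr(A Q A^H) for A ∈ ℂ^{N×N}. Then f attains its minimum uniquely at A = R Q^{-1}, and the minimum value is f(R Q^{-1}) = tr(R − R Q^{-1} R). -/
import Mathlib


open Matrix ComplexOrder

private lemma trace_re_pos {N : ℕ} {Q B : Matrix (Fin N) (Fin N) ℂ}
    (hQ : Q.PosDef) (hB : B ≠ 0) : 0 < ((B * Q * Bᴴ).trace).re := by
  obtain ⟨i, j, hij⟩ : ∃ i j, B i j ≠ 0 := by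
    by_contra h
    push_neg at h
    exact hB (by ext i j; simp [h])
  have hdiag : ∀ k, (B * Q * Bᴴ) k k = star (star (B k)) ⬝ᵥ Q *ᵥ (star (B k)) := by
    intro k
    simp only [mul_apply, conjTranspose_apply, dotProduct, mulVec, Finset.sum_mul,
      star_star, Pi.star_apply]
    rw [Finset.sum_comm]
    congr 1; ext a
    rw [Finset.mul_sum]
    congr 1; ext b
    ring
  have hnonneg : ∀ k, 0 ≤ ((B * Q * Bᴴ) k k).re := by
    intro k
    rw [hdiag k]
    exact (hQ.posSemidef.re_dotProduct_nonneg _)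
  have hpos : 0 < ((B * Q * Bᴴ) i i).re := by
    rw [hdiag i]
    refine hQ.re_dotProduct_pos ?_
    intro h
    exact hij (by simpa using congrFun h j)
  rw [Matrix.trace, Complex.re_sum]
  exact Finset.sum_pos' (fun k _ => hnonneg k) ⟨i, Finset.mem_univ i, hpos⟩

/-- Matrix-algebra core of the MMSE estimator: for `R` Hermitian and `Q`
Hermitian positive definite, the function
`f(A) = tr(R) − tr(A R) − tr(R Aᴴ) + tr(A Q Aᴴ)` attains its minimum uniquely
at `A = R Q⁻¹`, with minimum value `tr(R − R Q⁻¹ R)`. -/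
theorem mmse_matrix_minimization (N : ℕ) (R Q : Matrix (Fin N) (Fin N) ℂ)
    (hR : R.IsHermitian) (hQ : Q.PosDef) :
    (R.trace - (R * Q⁻¹ * R).trace - (R * (R * Q⁻¹)ᴴ).trace + (R * Q⁻¹ * Q * (R * Q⁻¹)ᴴ).trace
        = (R - R * Q⁻¹ * R).trace) ∧
      ∀ A : Matrix (Fin N) (Fin N) ℂ, A ≠ R * Q⁻¹ →
        (R.trace - (R * Q⁻¹ * R).trace - (R * (R * Q⁻¹)ᴴ).trace
            + (R * Q⁻¹ * Q * (R * Q⁻¹)ᴴ).trace).re <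
          (R.trace - (A * R).trace - (R * Aᴴ).trace + (A * Q * Aᴴ).trace).re := by
  have hdet : IsUnit Q.det := hQ.det_pos.ne'.isUnit
  have hQinv : Q⁻¹.IsHermitian := hQ.isHermitian.inv
  have hMH : (R * Q⁻¹)ᴴ = Q⁻¹ * R := by
    rw [conjTranspose_mul, hQinv.eq, hR.eq]
  have hinvmul : R * Q⁻¹ * Q = R := by
    rw [Matrix.mul_assoc, Matrix.nonsing_inv_mul Q hdet, Matrix.mul_one]
  have hQM : Q * (Q⁻¹ * R) = R := by
    rw [← Matrix.mul_assoc, Matrix.mul_nonsing_inv Q hdet, Matrix.one_mul]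
  have key1 : (R * (R * Q⁻¹)ᴴ).trace = (R * Q⁻¹ * R).trace := by
    rw [hMH, ← Matrix.mul_assoc, trace_mul_comm, ← Matrix.mul_assoc]
  have key2 : (R * Q⁻¹ * Q * (R * Q⁻¹)ᴴ).trace = (R * Q⁻¹ * R).trace := by
    rw [hinvmul, hMH, ← Matrix.mul_assoc]
  constructor
  · rw [key1, key2, trace_sub]; ring
  · intro A hA
    set M := R * Q⁻¹ with hM
    have hB : A - M ≠ 0 := sub_ne_zero_of_ne hA
    have hexp : (A - M) * Q * (A - M)ᴴ
        = A * Q * Aᴴ - A * R - R * Aᴴ + R * Q⁻¹ * R := by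
      rw [conjTranspose_sub, hMH]
      rw [Matrix.sub_mul, Matrix.sub_mul, Matrix.mul_sub, Matrix.mul_sub]
      rw [hM, hinvmul]
      rw [mul_assoc A Q (Q⁻¹ * R), hQM, ← mul_assoc R Q⁻¹ R]
      abel
    have hpos := trace_re_pos hQ hB
    rw [hexp] at hpos
    simp only [trace_add, trace_sub, Complex.add_re, Complex.sub_re] at hpos ⊢
    rw [key1, key2]
    linarith
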